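/- Let A = R⟨x,y⟩/(x² − v, y² − u(u²+λv²), xy + yx − 2εuv) with R = k[[u,v]], char k ≠ 2, λ ∉ {0,1}, ε² = 1+λ. Then A is a free R-module with basis {1, x, y, z}, where z = xy. -/

import Mathlib

noncomputable section

/-- `R = k[[u,v]]`, the ring of formal power series in two variables. -/
abbrev Rk (k : Type) [Field k] := MvPowerSeries (Fin 2) k

/-- The defining relations of the algebra
`A = R⟨x,y⟩/(x² − v, y² − u(u²+λv²), xy + yx − 2εuv)`. -/
inductive SurfRel (k : Type) [Field k] (lam eps : k) :
    FreeAlgebra (Rk k) (Fin 2) → FreeAlgebra (Rk k) (Fin 2) → Prop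
  | xsq : SurfRel k lam eps
      (FreeAlgebra.ι (Rk k) 0 * FreeAlgebra.ι (Rk k) 0)
      (algebraMap (Rk k) _ (MvPowerSeries.X 1))
  | ysq : SurfRel k lam eps
      (FreeAlgebra.ι (Rk k) 1 * FreeAlgebra.ι (Rk k) 1)
      (algebraMap (Rk k) _ (MvPowerSeries.X 0 *
        ((MvPowerSeries.X 0) ^ 2 + MvPowerSeries.C (σ := Fin 2) (R := k) lam * (MvPowerSeries.X 1) ^ 2)))
  | anticomm : SurfRel k lam eps
      (FreeAlgebra.ι (Rk k) 0 * FreeAlgebra.ι (Rk k) 1 +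
        FreeAlgebra.ι (Rk k) 1 * FreeAlgebra.ι (Rk k) 0)
      (algebraMap (Rk k) _ (2 * MvPowerSeries.C (σ := Fin 2) (R := k) eps *
        MvPowerSeries.X 0 * MvPowerSeries.X 1))

/-- The algebra `A = R⟨x,y⟩/(x² − v, y² − u(u²+λv²), xy + yx − 2εuv)`. -/
abbrev SurfAlg (k : Type) [Field k] (lam eps : k) := RingQuot (SurfRel k lam eps)

/-- The generator `x` of `A`. -/
def xA (k : Type) [Field k] (lam eps : k) : SurfAlg k lam eps :=
  RingQuot.mkAlgHom (Rk k) (SurfRel k lam eps) (FreeAlgebra.ι (Rk k) 0)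

/-- The generator `y` of `A`. -/
def yA (k : Type) [Field k] (lam eps : k) : SurfAlg k lam eps :=
  RingQuot.mkAlgHom (Rk k) (SurfRel k lam eps) (FreeAlgebra.ι (Rk k) 1)

/-- The central element `u` of `A`. -/
def uA (k : Type) [Field k] (lam eps : k) : SurfAlg k lam eps :=
  algebraMap (Rk k) _ (MvPowerSeries.X 0)

/-- The central element `v` of `A`. -/
def vA (k : Type) [Field k] (lam eps : k) : SurfAlg k lam eps :=
  algebraMap (Rk k) _ (MvPowerSeries.X 1)

/-- The scalar `λ` viewed in `A`. -/
def lamA (k : Type) [Field k] (lam eps : k) : SurfAlg k lam eps :=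
  algebraMap (Rk k) _ (MvPowerSeries.C (σ := Fin 2) (R := k) lam)

/-- The scalar `ε` viewed in `A`. -/
def epsA (k : Type) [Field k] (lam eps : k) : SurfAlg k lam eps :=
  algebraMap (Rk k) _ (MvPowerSeries.C (σ := Fin 2) (R := k) eps)


section Aux

open Quaternion

/- Generic noncommutative-ring helper lemmas (using only `+` and `*`, since the
`Sub`/`Neg` instances on `RingQuot` do not play well with generic rewriting). -/
section RingHelpers

variable {A : Type*} [Ring A]

private lemma aux_sq_add (X Y a : A) (ha : ∀ t : A, a * t = t * a) :
    (Y + a * X) * (Y + a * X) = Y * Y + a * (X * Y + Y * X) + a * a * (X * X) := by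
  have h1 : Y * (a * X) = a * (Y * X) := by rw [← mul_assoc, ← ha Y, mul_assoc]
  have h2 : (a * X) * (a * X) = a * a * (X * X) := by
    rw [mul_assoc, ← mul_assoc X a, ← ha X, mul_assoc, ← mul_assoc]
  have h3 : (a * X) * Y = a * (X * Y) := mul_assoc _ _ _
  rw [add_mul, mul_add, mul_add, h1, h2, h3, mul_add]
  abel

private lemma aux_x_mul (X Y a : A) (ha : ∀ t : A, a * t = t * a) :
    X * (Y + a * X) = X * Y + a * (X * X) := by
  have h : X * (a * X) = a * (X * X) := by rw [← mul_assoc, ← ha X, mul_assoc]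
  rw [mul_add, h]

private lemma aux_mul_x (X Y a : A) :
    (Y + a * X) * X = Y * X + a * (X * X) := by
  rw [add_mul, mul_assoc]

end RingHelpers

variable (k : Type) [Field k] (lam eps : k)

/-- `u` in `R`. -/
private abbrev uR : Rk k := MvPowerSeries.X 0
/-- `v` in `R`. -/
private abbrev vR : Rk k := MvPowerSeries.X 1
/-- `λ` in `R`. -/
private abbrev lamR : Rk k := MvPowerSeries.C (σ := Fin 2) (R := k) lam
/-- `ε` in `R`. -/
private abbrev epsR : Rk k := MvPowerSeries.C (σ := Fin 2) (R := k) eps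

/-- `c₂ = u(u² + λv²) − ε²u²v`, the square of `y − εu·x`. -/
private def c2R : Rk k :=
  uR k * (uR k ^ 2 + lamR k lam * vR k ^ 2) - epsR k eps ^ 2 * uR k ^ 2 * vR k

/-- The quaternion model of `A`. -/
private abbrev QM := ℍ[Rk k, vR k, c2R k lam eps]

/-- image of `x` in the quaternion model. -/
private def Ix : QM k lam eps := ⟨0, 1, 0, 0⟩

/-- image of `y` in the quaternion model. -/
private def Iy : QM k lam eps := ⟨0, epsR k eps * uR k, 1, 0⟩

/-- The map from the free algebra to the quaternion model. -/
private def F0 : FreeAlgebra (Rk k) (Fin 2) →ₐ[Rk k] QM k lam eps :=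
  FreeAlgebra.lift (Rk k) ![Ix k lam eps, Iy k lam eps]

private lemma F0_rel : ∀ ⦃x y : FreeAlgebra (Rk k) (Fin 2)⦄,
    SurfRel k lam eps x y → F0 k lam eps x = F0 k lam eps y := by
  intro x y h
  induction h with
  | xsq =>
      rw [map_mul, AlgHom.commutes]
      simp only [F0, FreeAlgebra.lift_ι_apply, Matrix.cons_val_zero]
      rw [Ix, QuaternionAlgebra.mk_mul_mk, QuaternionAlgebra.algebraMap_eq]
      refine QuaternionAlgebra.ext ?_ ?_ ?_ ?_ <;>
        · show _ = _
          try rw [c2R]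
          ring
  | ysq =>
      rw [map_mul, AlgHom.commutes]
      simp only [F0, FreeAlgebra.lift_ι_apply, Matrix.cons_val_one, Matrix.head_cons,
        Matrix.cons_val_zero]
      rw [Iy, QuaternionAlgebra.mk_mul_mk, QuaternionAlgebra.algebraMap_eq]
      refine QuaternionAlgebra.ext ?_ ?_ ?_ ?_ <;>
        · show _ = _
          try rw [c2R]
          ring
  | anticomm =>
      rw [map_add, map_mul, map_mul, AlgHom.commutes]
      simp only [F0, FreeAlgebra.lift_ι_apply, Matrix.cons_val_zero, Matrix.cons_val_one,
        Matrix.head_cons]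
      rw [Ix, Iy, QuaternionAlgebra.mk_mul_mk, QuaternionAlgebra.mk_mul_mk,
        QuaternionAlgebra.mk_add_mk, QuaternionAlgebra.algebraMap_eq]
      refine QuaternionAlgebra.ext ?_ ?_ ?_ ?_ <;>
        · show _ = _
          try rw [c2R]
          ring

/-- The map `A → QM`. -/
private def phi : SurfAlg k lam eps →ₐ[Rk k] QM k lam eps :=
  RingQuot.liftAlgHom (Rk k) ⟨F0 k lam eps, F0_rel k lam eps⟩

private lemma phi_x : phi k lam eps (xA k lam eps) = Ix k lam eps := by
  rw [phi, xA, RingQuot.liftAlgHom_mkAlgHom_apply, F0, FreeAlgebra.lift_ι_apply]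
  rfl

private lemma phi_y : phi k lam eps (yA k lam eps) = Iy k lam eps := by
  rw [phi, yA, RingQuot.liftAlgHom_mkAlgHom_apply, F0, FreeAlgebra.lift_ι_apply]
  rfl

private lemma hx : xA k lam eps * xA k lam eps =
    algebraMap (Rk k) (SurfAlg k lam eps) (vR k) := by
  have := RingQuot.mkAlgHom_rel (Rk k) (SurfRel.xsq (k := k) (lam := lam) (eps := eps))
  simpa only [xA, yA, map_mul, AlgHom.commutes] using this

private lemma hy : yA k lam eps * yA k lam eps =
    algebraMap (Rk k) (SurfAlg k lam eps)
      (uR k * (uR k ^ 2 + lamR k lam * vR k ^ 2)) := by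
  have := RingQuot.mkAlgHom_rel (Rk k) (SurfRel.ysq (k := k) (lam := lam) (eps := eps))
  simpa only [xA, yA, map_mul, AlgHom.commutes] using this

private lemma hxy : xA k lam eps * yA k lam eps + yA k lam eps * xA k lam eps =
    algebraMap (Rk k) (SurfAlg k lam eps)
      (2 * epsR k eps * uR k * vR k) := by
  have := RingQuot.mkAlgHom_rel (Rk k) (SurfRel.anticomm (k := k) (lam := lam) (eps := eps))
  simpa only [xA, yA, map_mul, map_add, AlgHom.commutes] using this

private lemma acomm (r : Rk k) (t : SurfAlg k lam eps) :
    algebraMap (Rk k) (SurfAlg k lam eps) r * t = t * algebraMap (Rk k) (SurfAlg k lam eps) r :=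
  Algebra.commutes r t

/-- The quaternionic basis of `A` given by `x` and `y − εu·x`. -/
private def qb : QuaternionAlgebra.Basis (SurfAlg k lam eps) (vR k) 0 (c2R k lam eps) where
  i := xA k lam eps
  j := yA k lam eps + algebraMap (Rk k) _ (-(epsR k eps * uR k)) * xA k lam eps
  k := xA k lam eps * yA k lam eps + algebraMap (Rk k) _ (-(epsR k eps * uR k * vR k))
  i_mul_i := by
    rw [hx, Algebra.algebraMap_eq_smul_one, zero_smul, add_zero]
  j_mul_j := by
    rw [aux_sq_add (xA k lam eps) (yA k lam eps) _ (acomm k lam eps _), hx, hy, hxy,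
      ← map_mul, ← map_mul, ← map_mul, ← map_add, ← map_add,
      Algebra.algebraMap_eq_smul_one]
    congr 1
    rw [c2R]
    ring
  i_mul_j := by
    rw [aux_x_mul (xA k lam eps) (yA k lam eps) _ (acomm k lam eps _), hx, ← map_mul]
    congr 2
    ring
  j_mul_i := by
    have key : (yA k lam eps + algebraMap (Rk k) (SurfAlg k lam eps) (-(epsR k eps * uR k)) *
          xA k lam eps) * xA k lam eps +
        (xA k lam eps * yA k lam eps +
          algebraMap (Rk k) (SurfAlg k lam eps) (-(epsR k eps * uR k * vR k))) = 0 := by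
      rw [aux_mul_x (xA k lam eps) (yA k lam eps), hx, ← map_mul, add_add_add_comm,
        add_comm (yA k lam eps * xA k lam eps) (xA k lam eps * yA k lam eps),
        hxy, ← map_add, ← map_add]
      rw [show 2 * epsR k eps * uR k * vR k + (-(epsR k eps * uR k) * vR k +
        -(epsR k eps * uR k * vR k)) = 0 by ring, map_zero]
    rw [zero_smul]
    exact (@eq_neg_of_add_eq_zero_left (SurfAlg k lam eps) _ _ _ key).trans (zero_sub _).symm

private lemma qb_i : (qb k lam eps).i = xA k lam eps := rfl
private lemma qb_j : (qb k lam eps).j =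
    yA k lam eps + algebraMap (Rk k) _ (-(epsR k eps * uR k)) * xA k lam eps := rfl
private lemma qb_k : (qb k lam eps).k =
    xA k lam eps * yA k lam eps +
      algebraMap (Rk k) _ (-(epsR k eps * uR k * vR k)) := rfl

/-- The map `QM → A`. -/
private def chi : QM k lam eps →ₐ[Rk k] SurfAlg k lam eps :=
  (qb k lam eps).liftHom

private lemma chi_mk (a b c d : Rk k) :
    chi k lam eps ⟨a, b, c, d⟩ = algebraMap (Rk k) _ a + b • (qb k lam eps).i +
      c • (qb k lam eps).j + d • (qb k lam eps).k := rfl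

private lemma chi_Ix : chi k lam eps (Ix k lam eps) = xA k lam eps := by
  rw [Ix, chi_mk, qb_i]
  rw [map_zero, zero_add, one_smul, zero_smul, add_zero, zero_smul, add_zero]

private lemma chi_Iy : chi k lam eps (Iy k lam eps) = yA k lam eps := by
  rw [Iy, chi_mk, qb_i, qb_j]
  rw [map_zero, zero_add, one_smul, zero_smul, add_zero, Algebra.smul_def,
    ← add_assoc, add_right_comm, ← add_mul, ← map_add,
    show epsR k eps * uR k + -(epsR k eps * uR k) = 0 by ring, map_zero, zero_mul, zero_add]

private lemma chi_phi : (chi k lam eps).comp (phi k lam eps) =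
    AlgHom.id (Rk k) (SurfAlg k lam eps) := by
  apply RingQuot.ringQuot_ext'
  apply FreeAlgebra.hom_ext
  funext i
  fin_cases i <;>
    simp only [Function.comp_apply, AlgHom.comp_apply, AlgHom.id_apply]
  · show chi k lam eps (phi k lam eps (xA k lam eps)) = xA k lam eps
    rw [phi_x, chi_Ix]
  · show chi k lam eps (phi k lam eps (yA k lam eps)) = yA k lam eps
    rw [phi_y, chi_Iy]

private lemma phi_chi : (phi k lam eps).comp (chi k lam eps) =
    AlgHom.id (Rk k) (QM k lam eps) := by
  apply QuaternionAlgebra.hom_ext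
  · show phi k lam eps (chi k lam eps ⟨0, 1, 0, 0⟩) = ⟨0, 1, 0, 0⟩
    rw [← Ix, chi_Ix, phi_x, Ix]
  · show phi k lam eps (chi k lam eps ⟨0, 0, 1, 0⟩) = ⟨0, 0, 1, 0⟩
    rw [chi_mk, qb_j]
    rw [map_zero, zero_add, zero_smul, zero_add, one_smul, zero_smul, add_zero]
    rw [map_add, map_mul, AlgHom.commutes, phi_x, phi_y, Ix, Iy,
      QuaternionAlgebra.algebraMap_eq, QuaternionAlgebra.mk_mul_mk,
      QuaternionAlgebra.mk_add_mk]
    refine QuaternionAlgebra.ext ?_ ?_ ?_ ?_ <;>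
      · show _ = _
        ring

/-- The algebra isomorphism `QM ≃ A`. -/
private def eAlg : QM k lam eps ≃ₐ[Rk k] SurfAlg k lam eps :=
  AlgEquiv.ofAlgHom (chi k lam eps) (phi k lam eps) (chi_phi k lam eps) (phi_chi k lam eps)

private lemma eAlg_apply (q : QM k lam eps) : eAlg k lam eps q = chi k lam eps q := rfl

/-- The coordinate change `(Fin 4 → R) ≃ₗ QM` sending the standard basis to
`1, i, j + εu·i, k + εuv·1`. -/
private def TL : (Fin 4 → Rk k) ≃ₗ[Rk k] QM k lam eps where
  toFun a := ⟨a 0 + epsR k eps * uR k * vR k * a 3, a 1 + epsR k eps * uR k * a 2, a 2, a 3⟩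
  invFun q := ![q.re - epsR k eps * uR k * vR k * q.imK, q.imI - epsR k eps * uR k * q.imJ,
    q.imJ, q.imK]
  map_add' a b := by
    refine QuaternionAlgebra.ext ?_ ?_ ?_ ?_ <;>
      · show _ = _
        simp only [Pi.add_apply, QuaternionAlgebra.re_add, QuaternionAlgebra.imI_add,
          QuaternionAlgebra.imJ_add, QuaternionAlgebra.imK_add]
        try ring
  map_smul' r a := by
    refine QuaternionAlgebra.ext ?_ ?_ ?_ ?_ <;>
      · show _ = _
        simp only [Pi.smul_apply, smul_eq_mul, RingHom.id_apply,
          QuaternionAlgebra.re_smul, QuaternionAlgebra.imI_smul,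
          QuaternionAlgebra.imJ_smul, QuaternionAlgebra.imK_smul]
        try ring
  left_inv a := by
    funext i
    fin_cases i <;>
      · show _ = _
        simp
        try ring
  right_inv q := by
    refine QuaternionAlgebra.ext ?_ ?_ ?_ ?_ <;>
      · show _ = _
        simp
        try ring

private lemma TL_apply (a : Fin 4 → Rk k) :
    TL k lam eps a = ⟨a 0 + epsR k eps * uR k * vR k * a 3,
      a 1 + epsR k eps * uR k * a 2, a 2, a 3⟩ := rfl

end Aux

/-- `A = k[[u,v]]⟨x,y⟩/(x² − v, y² − u(u²+λv²), xy + yx − 2εuv)` (with `char k ≠ 2`,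
`λ ∉ {0,1}`, `ε² = 1 + λ`) is a free `R = k[[u,v]]`-module with basis `{1, x, y, z}`,
where `z = xy`. -/
theorem stmt7 (k : Type) [Field k] (h2 : (2 : k) ≠ 0) (lam eps : k)
    (hlam0 : lam ≠ 0) (hlam1 : lam ≠ 1) (heps : eps ^ 2 = 1 + lam) :
    ∃ b : Module.Basis (Fin 4) (Rk k) (SurfAlg k lam eps),
      b 0 = 1 ∧ b 1 = xA k lam eps ∧ b 2 = yA k lam eps ∧
        b 3 = xA k lam eps * yA k lam eps := by
  refine ⟨(Pi.basisFun (Rk k) (Fin 4)).map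
      ((TL k lam eps).trans (eAlg k lam eps).toLinearEquiv), ?_, ?_, ?_, ?_⟩ <;>
    rw [Module.Basis.map_apply, Pi.basisFun_apply, LinearEquiv.trans_apply,
      AlgEquiv.toLinearEquiv_apply, TL_apply, eAlg_apply]
  · have h0 : (Pi.single 0 1 : Fin 4 → Rk k) 0 = 1 := rfl
    have h1 : (Pi.single 0 1 : Fin 4 → Rk k) 1 = 0 := rfl
    have h2 : (Pi.single 0 1 : Fin 4 → Rk k) 2 = 0 := rfl
    have h3 : (Pi.single 0 1 : Fin 4 → Rk k) 3 = 0 := rfl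
    rw [h0, h1, h2, h3, chi_mk]
    simp
  · have h0 : (Pi.single 1 1 : Fin 4 → Rk k) 0 = 0 := rfl
    have h1 : (Pi.single 1 1 : Fin 4 → Rk k) 1 = 1 := rfl
    have h2 : (Pi.single 1 1 : Fin 4 → Rk k) 2 = 0 := rfl
    have h3 : (Pi.single 1 1 : Fin 4 → Rk k) 3 = 0 := rfl
    rw [h0, h1, h2, h3]
    have : (⟨0 + epsR k eps * uR k * vR k * 0, 1 + epsR k eps * uR k * 0, 0, 0⟩ :
        QM k lam eps) = Ix k lam eps := by
      rw [Ix, QuaternionAlgebra.ext_iff]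
      refine ⟨by ring, by ring, rfl, rfl⟩
    rw [this, chi_Ix]
  · have h0 : (Pi.single 2 1 : Fin 4 → Rk k) 0 = 0 := rfl
    have h1 : (Pi.single 2 1 : Fin 4 → Rk k) 1 = 0 := rfl
    have h2 : (Pi.single 2 1 : Fin 4 → Rk k) 2 = 1 := rfl
    have h3 : (Pi.single 2 1 : Fin 4 → Rk k) 3 = 0 := rfl
    rw [h0, h1, h2, h3]
    have : (⟨0 + epsR k eps * uR k * vR k * 0, 0 + epsR k eps * uR k * 1, 1, 0⟩ :
        QM k lam eps) = Iy k lam eps := by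
      rw [Iy, QuaternionAlgebra.ext_iff]
      refine ⟨by ring, by ring, rfl, rfl⟩
    rw [this, chi_Iy]
  · have h0 : (Pi.single 3 1 : Fin 4 → Rk k) 0 = 0 := rfl
    have h1 : (Pi.single 3 1 : Fin 4 → Rk k) 1 = 0 := rfl
    have h2 : (Pi.single 3 1 : Fin 4 → Rk k) 2 = 0 := rfl
    have h3 : (Pi.single 3 1 : Fin 4 → Rk k) 3 = 1 := rfl
    rw [h0, h1, h2, h3]
    have : (⟨0 + epsR k eps * uR k * vR k * 1, 0 + epsR k eps * uR k * 0, 0, 1⟩ :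
        QM k lam eps) = ⟨epsR k eps * uR k * vR k, 0, 0, 1⟩ := by
      rw [QuaternionAlgebra.ext_iff]
      refine ⟨by ring, by ring, rfl, rfl⟩
    rw [this, chi_mk, qb_k]
    rw [zero_smul, add_zero, zero_smul, add_zero, one_smul,
      add_comm (xA k lam eps * yA k lam eps), ← add_assoc, ← map_add,
      show epsR k eps * uR k * vR k + -(epsR k eps * uR k * vR k) = 0 by ring, map_zero,
      zero_add]

end
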